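/- Let f be a time-varying vector field on E = EuclideanSpace ℝ (Fin n) with f(·,t) C¹ for each t, and let h : E → E be a C¹ vector field such that the Lie bracket vanishes: (D_x f(x,t))(h(x)) = (Dh(x))(f(x,t)) for all x ∈ E and t ∈ ℝ. If x : ℝ → E is a solution of ẋ = f(x,t) starting at (t₀,x₀), then y(t) := h(x(t)) satisfies y(t₀) = h(x₀) and HasDerivAt y ((D_x f(x(t),t))(y(t))) t for all t ≥ t₀; that is, t ↦ (x(t), h(x(t))) is a lifted solution of the complete lift of f starting at (t₀, x₀, h(x₀)). In particular, if f is time-invariant, t ↦ (x(t), f(x(t))) is a lifted solution starting at (t₀, x₀, f(x₀)). -/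

import Mathlib

noncomputable section

/-- The Euclidean state space. -/
abbrev E (n : ℕ) := EuclideanSpace ℝ (Fin n)

/-- `x` is a solution of `ẋ = f(x,t)` starting at `(t₀, x₀)`. -/
def IsSolution {n : ℕ} (f : E n → ℝ → E n) (t₀ : ℝ) (x₀ : E n) (x : ℝ → E n) : Prop :=
  x t₀ = x₀ ∧ ∀ t, t₀ ≤ t → HasDerivAt x (f (x t) t) t

/-- `(x, y)` is a lifted solution of the complete lift of `f`, starting at `(t₀, x₀, y₀)`:
`ẋ = f(x,t)`, `ẏ = (D_x f(x,t)) y`. -/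
def IsLiftedSolution {n : ℕ} (f : E n → ℝ → E n) (t₀ : ℝ) (x₀ y₀ : E n)
    (x y : ℝ → E n) : Prop :=
  IsSolution f t₀ x₀ x ∧ y t₀ = y₀ ∧
    ∀ t, t₀ ≤ t → HasDerivAt y (fderiv ℝ (fun z => f z t) (x t) (y t)) t

lemma lifted_aux {n : ℕ} (f : E n → ℝ → E n)
    (h : E n → E n) (hh : ContDiff ℝ 1 h)
    (hbracket : ∀ (x : E n) (t : ℝ),
      fderiv ℝ (fun z => f z t) x (h x) = fderiv ℝ h x (f x t))
    (t₀ : ℝ) (x₀ : E n) (x : ℝ → E n) (hx : IsSolution f t₀ x₀ x) :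
    IsLiftedSolution f t₀ x₀ (h x₀) x (fun t => h (x t)) := by
  obtain ⟨hx0, hxd⟩ := hx
  refine ⟨⟨hx0, hxd⟩, by simp [hx0], fun t ht => ?_⟩
  have hdh : HasFDerivAt h (fderiv ℝ h (x t)) (x t) :=
    (hh.differentiable one_ne_zero (x t)).hasFDerivAt
  have := hdh.comp_hasDerivAt t (hxd t ht)
  rw [hbracket]
  exact this

/-- If the Lie bracket `[f, h]` vanishes, i.e. `(D_x f(x,t))(h(x)) = (Dh(x))(f(x,t))`,
then `t ↦ (x(t), h(x(t)))` is a lifted solution of the complete lift of `f` along any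
solution `x` of `ẋ = f(x,t)`. In particular, if `f` is time-invariant then
`t ↦ (x(t), f(x(t)))` is a lifted solution starting at `(t₀, x₀, f(x₀))`. -/
theorem lifted_solution_of_commuting_field {n : ℕ} (f : E n → ℝ → E n)
    (hf : ∀ t, ContDiff ℝ 1 (fun z => f z t))
    (h : E n → E n) (hh : ContDiff ℝ 1 h)
    (hbracket : ∀ (x : E n) (t : ℝ),
      fderiv ℝ (fun z => f z t) x (h x) = fderiv ℝ h x (f x t))
    (t₀ : ℝ) (x₀ : E n) (x : ℝ → E n) (hx : IsSolution f t₀ x₀ x) :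
    IsLiftedSolution f t₀ x₀ (h x₀) x (fun t => h (x t)) ∧
    ((∀ (z : E n) (s s' : ℝ), f z s = f z s') →
      IsLiftedSolution f t₀ x₀ (f x₀ t₀) x (fun t => f (x t) t₀)) := by
  refine ⟨lifted_aux f h hh hbracket t₀ x₀ x hx, fun hti => ?_⟩
  exact lifted_aux f (fun z => f z t₀) (hf t₀)
    (fun z t => by
      have heq : (fun w => f w t) = (fun w => f w t₀) := funext fun w => hti w t t₀
      rw [heq]; exact congrArg _ (hti z t₀ t)) t₀ x₀ x hx
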